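/- Let τ : D → D be injective with inverse σ = τ^{−1} : τ(D) → D, and let H ⊆ τ(D) be finite and nonempty. Then there exists a subcollection B ⊆ H such that ∫₀¹ μ_H(t) dt = Σ_{K∈B} |σ(K)| · (|K| − |G₁(K|B)*|)/|K|. -/

import Mathlib

open MeasureTheory Set
open scoped ENNReal NNReal Classical

noncomputable section

/-- A dyadic subinterval of `[0,1)`: the half-open interval
`[k/2^n, (k+1)/2^n)` with `k < 2^n`. -/
structure DyadicI where
  n : ℕ
  k : ℕ
  hk : k < 2 ^ n

instance : Nonempty DyadicI := ⟨⟨0, 0, by norm_num⟩⟩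

namespace DyadicI

/-- The length `|I| = 2^{-n}` of a dyadic interval. -/
def len (I : DyadicI) : ℝ := (2 : ℝ) ^ (-(I.n : ℤ))

/-- The left endpoint `k 2^{-n}` of a dyadic interval. -/
def lep (I : DyadicI) : ℝ := (I.k : ℝ) * I.len

/-- The underlying point set `[k/2^n, (k+1)/2^n)` of a dyadic interval. -/
def toSet (I : DyadicI) : Set ℝ := Set.Ico I.lep (I.lep + I.len)

/-- The `L^∞`-normalized Haar function `h_I`: `1` on the left half of `I`,
`-1` on the right half of `I`, `0` off `I`. -/
def haar (I : DyadicI) (t : ℝ) : ℝ :=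
  if t ∈ Set.Ico I.lep (I.lep + I.len / 2) then 1
  else if t ∈ Set.Ico (I.lep + I.len / 2) (I.lep + I.len) then -1
  else 0

end DyadicI

open DyadicI

section Defs

variable {X : Type*} [NormedAddCommGroup X] [NormedSpace ℝ X]

/-- The square function `𝕊(f)` of the `X`-valued Haar expansion `f = ∑_{I ∈ s} x_I h_I`:
`𝕊(f)(t) = (E_ε ‖∑_I ε_I x_I h_I(t)‖²)^{1/2}`, the average being taken over all
choices of signs `ε_I ∈ {±1}`, `I ∈ s`. -/
def sqFn (s : Finset DyadicI) (x : DyadicI → X) (t : ℝ) : ℝ :=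
  Real.sqrt ((∑ ε : {I // I ∈ s} → Bool,
    ‖∑ I ∈ s.attach, ((if ε I then (1 : ℝ) else -1) * haar I.1 t) • x I.1‖ ^ 2) /
      2 ^ s.card)

/-- The `H^p_X` (quasi-)norm of `f = ∑_{I ∈ s} x_I h_I`:
`‖f‖ = (∫₀¹ 𝕊(f)(t)^p dt)^{1/p}`. -/
def HpNormV (p : ℝ) (s : Finset DyadicI) (x : DyadicI → X) : ℝ :=
  (∫ t in Set.Icc (0 : ℝ) 1, sqFn s x t ^ p) ^ (1 / p)

/-- The coefficients of `(T_{τ,p} ⊗ Id_X)(f)` for `f = ∑_{I ∈ s} x_I h_I`, namely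
`(T_{τ,p} ⊗ Id_X)(f) = ∑_{I ∈ s} (|I|/|τ(I)|)^{1/p} x_I h_{τ(I)}`, as a family of
coefficients indexed by the Haar support `τ(s)`. -/
def rearrCoef (τ : DyadicI → DyadicI) (p : ℝ) (s : Finset DyadicI) (x : DyadicI → X) :
    DyadicI → X :=
  fun J => ∑ I ∈ s, if τ I = J then ((len I / len (τ I)) ^ (1 / p)) • x I else 0

/-- The scalar dyadic square function `S(f) = (∑_I a_I² 1_I)^{1/2}`
of `f = ∑_{I ∈ s} a_I h_I`. -/
def sqFnS (s : Finset DyadicI) (a : DyadicI → ℝ) (t : ℝ) : ℝ :=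
  Real.sqrt (∑ I ∈ s, a I ^ 2 * Set.indicator (toSet I) (fun _ => (1 : ℝ)) t)

/-- The scalar dyadic `H^p` (quasi-)norm `‖f‖_{H^p} = ‖S(f)‖_{L^p[0,1]}`. -/
def HpNormS (p : ℝ) (s : Finset DyadicI) (a : DyadicI → ℝ) : ℝ :=
  (∫ t in Set.Icc (0 : ℝ) 1, sqFnS s a t ^ p) ^ (1 / p)

/-- The coefficients of the scalar rearrangement operator `T_{τ,p}` applied to
`f = ∑_{I ∈ s} a_I h_I`; `T_{τ,p}` is determined by
`T_{τ,p}(h_I/|I|^{1/p}) = h_{τ(I)}/|τ(I)|^{1/p}`. -/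
def rearrCoefS (τ : DyadicI → DyadicI) (p : ℝ) (s : Finset DyadicI) (a : DyadicI → ℝ) :
    DyadicI → ℝ :=
  fun J => ∑ I ∈ s, if τ I = J then ((len I / len (τ I)) ^ (1 / p)) * a I else 0

/-- The operator norm `‖T_{τ,p} ⊗ Id_X : H^p_X → H^p_X‖ ∈ [0,∞]`, computed as the
supremum over finitely supported `f` in the unit ball of `H^p_X`. -/
def hpOpNorm (τ : DyadicI → DyadicI) (p : ℝ) (X : Type*) [NormedAddCommGroup X]
    [NormedSpace ℝ X] : ℝ≥0∞ :=
  ⨆ (s : Finset DyadicI) (x : DyadicI → X) (_ : HpNormV p s x ≤ 1),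
    ENNReal.ofReal (HpNormV p (s.image τ) (rearrCoef τ p s x))

/-- The scalar operator norm `‖T_{τ,p} : H^p → H^p‖ ∈ [0,∞]`. -/
def hpOpNormS (τ : DyadicI → DyadicI) (p : ℝ) : ℝ≥0∞ :=
  ⨆ (s : Finset DyadicI) (a : DyadicI → ℝ) (_ : HpNormS p s a ≤ 1),
    ENNReal.ofReal (HpNormS p (s.image τ) (rearrCoefS τ p s a))

/-- For `H = τ(L)` (so that `σ(J) = I` for `J = τ(I)`, `I ∈ L`), the maximal function
`μ_H(t) = sup_{J ∈ H} (|σ(J)|/|J|) 1_J(t) = sup_{I ∈ L} (|I|/|τ(I)|) 1_{τ(I)}(t)`,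
as an `[0,∞]`-valued function. -/
def muSet (τ : DyadicI → DyadicI) (L : Set DyadicI) (t : ℝ) : ℝ≥0∞ :=
  ⨆ (I : DyadicI) (_ : I ∈ L),
    ENNReal.ofReal (len I / len (τ I) * Set.indicator (toSet (τ I)) (fun _ => (1 : ℝ)) t)

/-- For `H = τ(L)` with `L` finite, the (real-valued) maximal function
`μ_H(t) = max_{I ∈ L} (|I|/|τ(I)|) 1_{τ(I)}(t)`. -/
def muFin (τ : DyadicI → DyadicI) (L : Finset DyadicI) (t : ℝ) : ℝ :=
  ((L.sup fun I =>
    Real.toNNReal (len I / len (τ I) * Set.indicator (toSet (τ I)) (fun _ => (1 : ℝ)) t) : ℝ≥0) : ℝ)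

/-- The point set `L* = ⋃_{I ∈ L} I` covered by a collection of dyadic intervals. -/
def pointSet (L : Set DyadicI) : Set ℝ := ⋃ I ∈ L, toSet I

/-- The constant `C₁ = sup_{H ⊆ τ(D), H ≠ ∅} (1/|σ(H)*|) ∫₀¹ μ_H(t) dt`, where
nonempty collections `H ⊆ τ(D)` are parametrized as `H = τ(L)` for nonempty `L ⊆ D`,
so that `σ(H)* = L*`. -/
def Cone (τ : DyadicI → DyadicI) : ℝ≥0∞ :=
  ⨆ (L : Set DyadicI) (_ : L.Nonempty),
    (∫⁻ t in Set.Icc (0 : ℝ) 1, muSet τ L t) / volume (pointSet L)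

/-- The square of the dyadic BMO norm of `g = ∑_{J ∈ s} a_J h_J`:
`‖g‖_{BMO}² = sup_{I ∈ D} (1/|I|) ∑_{J ⊆ I} a_J² |J|`. -/
def bmoSq (s : Finset DyadicI) (a : DyadicI → ℝ) : ℝ≥0∞ :=
  ⨆ I : DyadicI, ENNReal.ofReal
    ((∑ J ∈ s.filter fun J => toSet J ⊆ toSet I, a J ^ 2 * len J) / len I)

/-- The coefficients of `S_σ(g)` for `g = ∑_{J ∈ s} a_J h_J`, where `σ = τ⁻¹` on `τ(D)`:
`S_σ(h_J) = h_{σ(J)}` for `J ∈ τ(D)` and `S_σ(h_J) = 0` otherwise, so that the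
coefficient of `h_K` in `S_σ(g)` is `a_{τ(K)}` if `τ(K) ∈ s`, and `0` otherwise. -/
def sSigmaCoef (τ : DyadicI → DyadicI) (s : Finset DyadicI) (a : DyadicI → ℝ) :
    DyadicI → ℝ :=
  fun K => if τ K ∈ s then a (τ K) else 0

/-- The Haar support of `S_σ(g)` for `g` with Haar support `s`:
`σ(s ∩ τ(D))`, i.e. the preimage under `τ` of `s`. -/
def sSigmaSupp (τ : DyadicI → DyadicI) (s : Finset DyadicI) : Finset DyadicI :=
  (s.filter fun J => J ∈ Set.range τ).image (Function.invFun τ)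

/-- The operator norm `‖S_σ‖_{BMO} ∈ [0,∞]` of `S_σ` with respect to the dyadic BMO
norm, computed over finitely supported Haar expansions. -/
def bmoOpNorm (τ : DyadicI → DyadicI) : ℝ≥0∞ :=
  ⨆ (s : Finset DyadicI) (a : DyadicI → ℝ) (_ : bmoSq s a ≤ 1),
    (bmoSq (sSigmaSupp τ s) (sSigmaCoef τ s a)) ^ (1 / 2 : ℝ)

/-- The Carleson constant `⟦C⟧ = sup_{I ∈ C} (1/|I|) ∑_{J ∈ C, J ⊆ I} |J| ∈ [0,∞]`
of a collection of dyadic intervals. -/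
def carleson (C : Set DyadicI) : ℝ≥0∞ :=
  ⨆ (I : DyadicI) (_ : I ∈ C),
    (∑' J : {J : DyadicI // J ∈ C ∧ toSet J ⊆ toSet I}, ENNReal.ofReal (len J.1)) /
      ENNReal.ofReal (len I)

/-- The `L^p_X = L^p([0,1]; X)` (Bochner) norm of `f = ∑_{I ∈ s} x_I h_I`. -/
def LpNormV (p : ℝ) (s : Finset DyadicI) (x : DyadicI → X) : ℝ :=
  (∫ t in Set.Icc (0 : ℝ) 1, ‖∑ I ∈ s, haar I t • x I‖ ^ p) ^ (1 / p)

/-- The operator norm `‖T_{τ,p} ⊗ Id_X : L^p_X → L^p_X‖ ∈ [0,∞]`, computed over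
finitely supported Haar expansions. -/
def lpOpNorm (τ : DyadicI → DyadicI) (p : ℝ) (X : Type*) [NormedAddCommGroup X]
    [NormedSpace ℝ X] : ℝ≥0∞ :=
  ⨆ (s : Finset DyadicI) (x : DyadicI → X) (_ : LpNormV p s x ≤ 1),
    ENNReal.ofReal (LpNormV p (s.image τ) (rearrCoef τ p s x))

/-- The operator norm `‖T_{τ,p}^{-1} ⊗ Id_X‖ ∈ [0,∞]` on the span of
`{h_J : J ∈ τ(D)}` with the `L^p_X` norm: the map determined by
`x h_{τ(I)}/|τ(I)|^{1/p} ↦ x h_I/|I|^{1/p}`, i.e. sending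
`g = ∑_{I ∈ L} x_I h_{τ(I)}` to `∑_{I ∈ L} (|τ(I)|/|I|)^{1/p} x_I h_I`. -/
def lpInvOpNorm (τ : DyadicI → DyadicI) (p : ℝ) (X : Type*) [NormedAddCommGroup X]
    [NormedSpace ℝ X] : ℝ≥0∞ :=
  ⨆ (L : Finset DyadicI) (x : DyadicI → X)
    (_ : LpNormV p (L.image τ) (fun J => ∑ I ∈ L, if τ I = J then x I else 0) ≤ 1),
    ENNReal.ofReal (LpNormV p L fun I => ((len (τ I) / len I) ^ (1 / p)) • x I)

/-- The operator norm `‖T_{τ,1}^{-1}‖₁ ∈ [0,∞]` on the span of `{h_J : J ∈ τ(D)}`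
with the dyadic `H¹` norm: the map determined by `h_{τ(I)}/|τ(I)| ↦ h_I/|I|`,
i.e. sending `g = ∑_{I ∈ L} a_I h_{τ(I)}` to `∑_{I ∈ L} (|τ(I)|/|I|) a_I h_I`. -/
def h1InvOpNorm (τ : DyadicI → DyadicI) : ℝ≥0∞ :=
  ⨆ (L : Finset DyadicI) (a : DyadicI → ℝ)
    (_ : HpNormS 1 (L.image τ) (fun J => ∑ I ∈ L, if τ I = J then a I else 0) ≤ 1),
    ENNReal.ofReal (HpNormS 1 L fun I => (len (τ I) / len I) * a I)

/-- The Rademacher average `(E_ε ‖∑_{i<n} ε_i a_i‖^p)^{1/p}` over all choices of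
signs `ε_i ∈ {±1}`. -/
def radAvg (p : ℝ) {Y : Type*} [NormedAddCommGroup Y] [NormedSpace ℝ Y] (n : ℕ)
    (a : Fin n → Y) : ℝ :=
  ((∑ ε : Fin n → Bool, ‖∑ i, (if ε i then (1 : ℝ) else -1) • a i‖ ^ p) / 2 ^ n) ^ (1 / p)

/-- The type-`p` constant `Type_p(Y) ∈ [0,∞]`: the least `C` such that
`(E_ε ‖∑ ε_i a_i‖^p)^{1/p} ≤ C (∑ ‖a_i‖^p)^{1/p}` for all finite families in `Y`. -/
def typeConst (p : ℝ) (Y : Type*) [NormedAddCommGroup Y] [NormedSpace ℝ Y] : ℝ≥0∞ :=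
  sInf {C : ℝ≥0∞ | ∀ (n : ℕ) (a : Fin n → Y),
    ENNReal.ofReal (radAvg p n a) ≤ C * ENNReal.ofReal ((∑ i, ‖a i‖ ^ p) ^ (1 / p))}

/-- The UMD property of a Banach space `E`: for each `1 < r < ∞` the Haar system is
unconditional in `L^r_E`. -/
def IsUMD (E : Type*) [NormedAddCommGroup E] [NormedSpace ℝ E] : Prop :=
  ∀ r : ℝ, 1 < r → ∃ β : ℝ, ∀ (s : Finset DyadicI) (x : DyadicI → E) (ε : DyadicI → ℝ),
    (∀ I, ε I = 1 ∨ ε I = -1) →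
    LpNormV r s (fun I => ε I • x I) ≤ β * LpNormV r s x

/-- `B` is a block in `L` with top `I`: `B ⊆ L`, `I` is the unique maximal interval
of `B`, and `B` is order-convex in `L` between its elements and `I`. -/
def IsBlock (L : Set DyadicI) (B : Set DyadicI) (I : DyadicI) : Prop :=
  B ⊆ L ∧ I ∈ B ∧ (∀ J ∈ B, toSet J ⊆ toSet I) ∧
    ∀ J ∈ B, ∀ K ∈ L, toSet J ⊆ toSet K → toSet K ⊆ toSet I → K ∈ B

/-- `G₁(K | E)`: the maximal dyadic intervals of `E` strictly contained in `K`. -/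
def gen1 (K : DyadicI) (E : Set DyadicI) : Set DyadicI :=
  {J | J ∈ E ∧ toSet J ⊂ toSet K ∧
    ∀ J' ∈ E, toSet J' ⊂ toSet K → toSet J ⊆ toSet J' → J' = J}

end Defs
section Aux

open DyadicI

lemma DyadicI.len_pos (I : DyadicI) : 0 < I.len := zpow_pos (by norm_num) _

lemma DyadicI.lep_nonneg (I : DyadicI) : 0 ≤ I.lep :=
  mul_nonneg (Nat.cast_nonneg _) I.len_pos.le

lemma DyadicI.right_le_one (I : DyadicI) : I.lep + I.len ≤ 1 := by
  have hk : ((I.k : ℝ) + 1) ≤ 2 ^ I.n := by exact_mod_cast I.hk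
  have h1 : I.lep + I.len = ((I.k : ℝ) + 1) * I.len := by rw [lep]; ring
  have h2 : ((I.k : ℝ) + 1) * I.len ≤ (2 : ℝ) ^ I.n * I.len :=
    mul_le_mul_of_nonneg_right hk I.len_pos.le
  have h3 : (2 : ℝ) ^ I.n * I.len = 1 := by
    rw [len, ← zpow_natCast (2 : ℝ) I.n, ← zpow_add₀ (two_ne_zero)]
    simp
  linarith

lemma DyadicI.toSet_subset_Icc (I : DyadicI) : toSet I ⊆ Set.Icc 0 1 := by
  intro t ht
  rw [toSet, Set.mem_Ico] at ht
  exact ⟨le_trans I.lep_nonneg ht.1, le_trans ht.2.le I.right_le_one⟩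

lemma DyadicI.measurableSet_toSet (I : DyadicI) : MeasurableSet (toSet I) :=
  measurableSet_Ico

lemma DyadicI.volume_toSet (I : DyadicI) :
    MeasureTheory.volume (toSet I) = ENNReal.ofReal I.len := by
  rw [toSet, Real.volume_Ico]; congr 1; ring

lemma DyadicI.subset_iff {I J : DyadicI} :
    toSet I ⊆ toSet J ↔ J.lep ≤ I.lep ∧ I.lep + I.len ≤ J.lep + J.len := by
  rw [toSet, toSet, Set.Ico_subset_Ico_iff (by linarith [I.len_pos])]

lemma DyadicI.len_le_of_subset {I J : DyadicI} (h : toSet I ⊆ toSet J) :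
    I.len ≤ J.len := by
  obtain ⟨h1, h2⟩ := subset_iff.mp h; linarith

lemma DyadicI.eq_of_len_eq_lep_eq {I J : DyadicI} (h1 : I.len = J.len)
    (h2 : I.lep = J.lep) : I = J := by
  have hn : I.n = J.n := by
    have h := zpow_right_injective₀ (by norm_num : (0:ℝ) < 2)
      (by norm_num : (2:ℝ) ≠ 1) h1
    omega
  have hk : I.k = J.k := by
    rw [lep, lep, h1] at h2
    have := mul_right_cancel₀ J.len_pos.ne' h2
    exact_mod_cast this
  cases I; cases J; simp_all

lemma DyadicI.eq_of_subset_of_len_le {I J : DyadicI} (hs : toSet I ⊆ toSet J)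
    (hl : J.len ≤ I.len) : I = J := by
  obtain ⟨h1, h2⟩ := subset_iff.mp hs
  have hlen : I.len = J.len := le_antisymm (len_le_of_subset hs) hl
  exact eq_of_len_eq_lep_eq hlen (le_antisymm (by linarith) h1)

lemma DyadicI.toSet_inj {I J : DyadicI} (h : toSet I = toSet J) : I = J :=
  eq_of_subset_of_len_le h.subset (len_le_of_subset h.superset)

lemma DyadicI.subset_of_mem_of_len_le {I J : DyadicI} {t : ℝ}
    (htI : t ∈ toSet I) (htJ : t ∈ toSet J) (hl : I.len ≤ J.len) :
    toSet I ⊆ toSet J := by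
  have hIp := I.len_pos
  have hn : J.n ≤ I.n := by
    rw [len, len, zpow_le_zpow_iff_right₀ (by norm_num : (1:ℝ) < 2)] at hl
    omega
  set d : ℕ := I.n - J.n with hd
  have hJlen : J.len = 2 ^ d * I.len := by
    rw [len, len, ← zpow_natCast (2:ℝ) d, ← zpow_add₀ (two_ne_zero)]
    congr 1
    omega
  rw [toSet, Set.mem_Ico] at htI htJ
  obtain ⟨hI1, hI2⟩ := htI
  obtain ⟨hJ1, hJ2⟩ := htJ
  have key1 : I.k + 1 ≤ (J.k + 1) * 2 ^ d := by
    have hr : (I.k : ℝ) * I.len < (((J.k + 1) * 2 ^ d : ℕ) : ℝ) * I.len := by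
      push_cast
      calc (I.k : ℝ) * I.len ≤ t := hI1
        _ < J.lep + J.len := hJ2
        _ = ((J.k : ℝ) + 1) * 2 ^ d * I.len := by rw [lep, hJlen]; ring
    have hlt : (I.k : ℕ) < (J.k + 1) * 2 ^ d := by
      have h' := lt_of_mul_lt_mul_right hr hIp.le
      exact_mod_cast h'
    omega
  have key2 : J.k * 2 ^ d ≤ I.k := by
    have hr : ((J.k * 2 ^ d : ℕ) : ℝ) * I.len < ((I.k : ℝ) + 1) * I.len := by
      push_cast
      calc (J.k : ℝ) * 2 ^ d * I.len = J.lep := by rw [lep, hJlen]; ring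
        _ ≤ t := hJ1
        _ < I.lep + I.len := hI2
        _ = ((I.k : ℝ) + 1) * I.len := by rw [lep]; ring
    have hlt : (J.k * 2 ^ d : ℕ) < I.k + 1 := by
      have h' := lt_of_mul_lt_mul_right hr hIp.le
      exact_mod_cast h'
    omega
  rw [subset_iff]
  constructor
  · rw [lep, lep, hJlen]
    have : (J.k : ℝ) * 2 ^ d ≤ (I.k : ℝ) := by exact_mod_cast key2
    nlinarith
  · rw [lep, lep, hJlen]
    have : (I.k : ℝ) + 1 ≤ ((J.k : ℝ) + 1) * 2 ^ d := by exact_mod_cast key1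
    nlinarith

end Aux

/-- Let `τ : D → D` be injective with inverse `σ = τ⁻¹` on `τ(D)`,
and let `H ⊆ τ(D)` be finite and nonempty (written as `H = τ(L)` for a finite nonempty
`L ⊆ D`, so that `μ_H = muSet τ L`). Then there is a subcollection `B ⊆ H`
(written as `B = τ(M)` with `M ⊆ L`, so that `σ(K) = I` for `K = τ(I)`, `I ∈ M`) with
`∫₀¹ μ_H(t) dt = ∑_{K ∈ B} |σ(K)| · (|K| - |G₁(K|B)*|)/|K|`. -/
theorem statement10 (τ : DyadicI → DyadicI) (hτ : Function.Injective τ)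
    (L : Finset DyadicI) (hL : L.Nonempty) :
    ∃ M ⊆ L,
      (∫⁻ t in Set.Icc (0 : ℝ) 1, muSet τ ↑L t) =
        ENNReal.ofReal (∑ I ∈ M, DyadicI.len I *
          ((DyadicI.len (τ I) -
              (volume (⋃ J ∈ gen1 (τ I) (τ '' (M : Set DyadicI)), DyadicI.toSet J)).toReal) /
            DyadicI.len (τ I))) := by
  classical
  set w : DyadicI → ℝ := fun I => len I / len (τ I) with hw
  have hwpos : ∀ I, 0 < w I := fun I => div_pos (len_pos _) (len_pos _)
  set M : Finset DyadicI :=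
    L.filter (fun I => ∀ J ∈ L, toSet (τ I) ⊂ toSet (τ J) → w J < w I) with hM
  have hMQ : ∀ I ∈ M, ∀ J ∈ L, toSet (τ I) ⊂ toSet (τ J) → w J < w I :=
    fun I hI => (Finset.mem_filter.mp hI).2
  have hML : ∀ I ∈ M, I ∈ L := fun I hI => (Finset.mem_filter.mp hI).1
  refine ⟨M, Finset.filter_subset _ _, ?_⟩
  set U : DyadicI → Set ℝ :=
    fun I => ⋃ J ∈ M.filter (fun J => toSet (τ J) ⊂ toSet (τ I)), toSet (τ J) with hUdef
  set A : DyadicI → Set ℝ := fun I => toSet (τ I) \ U I with hAdef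
  have hUsub : ∀ I, U I ⊆ toSet (τ I) := by
    intro I t ht
    simp only [hUdef, Set.mem_iUnion] at ht
    obtain ⟨J, hJ, htJ⟩ := ht
    exact ((Finset.mem_filter.mp hJ).2).subset htJ
  have hUmeas : ∀ I, MeasurableSet (U I) := by
    intro I
    exact Finset.measurableSet_biUnion _ (fun J _ => measurableSet_toSet _)
  have hAmeas : ∀ I, MeasurableSet (A I) :=
    fun I => (measurableSet_toSet _).diff (hUmeas I)
  have hmemU : ∀ I J : DyadicI, J ∈ M → toSet (τ J) ⊂ toSet (τ I) →
      toSet (τ J) ⊆ U I := by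
    intro I J hJM hss t ht
    simp only [hUdef, Set.mem_iUnion]
    exact ⟨J, Finset.mem_filter.mpr ⟨hJM, hss⟩, ht⟩
  -- pointwise identity
  have key : ∀ t : ℝ, muSet τ ↑L t
      = ∑ I ∈ M, (A I).indicator (fun _ => ENNReal.ofReal (w I)) t := by
    intro t
    by_cases hex : ∃ I ∈ L, t ∈ toSet (τ I)
    · set C : Finset DyadicI := L.filter (fun I => t ∈ toSet (τ I)) with hC
      have hCne : C.Nonempty := by
        obtain ⟨I, hI, ht⟩ := hex
        exact ⟨I, Finset.mem_filter.mpr ⟨hI, ht⟩⟩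
      obtain ⟨I1, hI1, hI1max⟩ := C.exists_max_image w hCne
      set C' : Finset DyadicI := C.filter (fun I => ∀ J ∈ C, w J ≤ w I) with hC'
      have hI1' : I1 ∈ C' := Finset.mem_filter.mpr ⟨hI1, hI1max⟩
      obtain ⟨S, hSC', hSmax⟩ := C'.exists_max_image (fun I => len (τ I)) ⟨I1, hI1'⟩
      have hSC : S ∈ C := (Finset.mem_filter.mp hSC').1
      have hSL : S ∈ L := (Finset.mem_filter.mp hSC).1
      have htS : t ∈ toSet (τ S) := (Finset.mem_filter.mp hSC).2
      have hSw : ∀ J ∈ C, w J ≤ w S := (Finset.mem_filter.mp hSC').2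
      have hSM : S ∈ M := by
        rw [hM, Finset.mem_filter]
        refine ⟨hSL, fun J hJ hss => ?_⟩
        have hJC : J ∈ C := Finset.mem_filter.mpr ⟨hJ, hss.subset htS⟩
        refine lt_of_le_of_ne (hSw J hJC) (fun heq => ?_)
        have hJC' : J ∈ C' := Finset.mem_filter.mpr ⟨hJC, fun K hK => heq ▸ hSw K hK⟩
        have h1 : len (τ J) ≤ len (τ S) := hSmax J hJC'
        have h2 : τ S = τ J := eq_of_subset_of_len_le hss.subset h1
        exact hss.ne (congrArg toSet h2)
      have hLHS : muSet τ ↑L t = ENNReal.ofReal (w S) := by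
        apply le_antisymm
        · simp only [muSet]
          refine iSup₂_le fun I hI => ?_
          rw [Finset.mem_coe] at hI
          by_cases ht : t ∈ toSet (τ I)
          · rw [Set.indicator_of_mem ht, mul_one]
            exact ENNReal.ofReal_le_ofReal (hSw I (Finset.mem_filter.mpr ⟨hI, ht⟩))
          · rw [Set.indicator_of_notMem ht, mul_zero]
            simp
        · simp only [muSet]
          refine le_iSup₂_of_le S (Finset.mem_coe.mpr hSL) ?_
          rw [Set.indicator_of_mem htS, mul_one, hw]
      have htA : t ∈ A S := by
        refine ⟨htS, fun htU => ?_⟩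
        simp only [hUdef, Set.mem_iUnion] at htU
        obtain ⟨J, hJ, htJ⟩ := htU
        obtain ⟨hJM, hJss⟩ := Finset.mem_filter.mp hJ
        have hJC : J ∈ C := Finset.mem_filter.mpr ⟨hML J hJM, htJ⟩
        have hlt := hMQ J hJM S hSL hJss
        exact absurd (hSw J hJC) (not_le.mpr hlt)
      have hother : ∀ I ∈ M, I ≠ S → t ∉ A I := by
        intro I hIM hne htAI
        obtain ⟨htI, htUI⟩ := htAI
        have hIC : I ∈ C := Finset.mem_filter.mpr ⟨hML I hIM, htI⟩
        have hwI : w I ≤ w S := hSw I hIC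
        have hne' : toSet (τ I) ≠ toSet (τ S) := fun h => hne (hτ (toSet_inj h))
        rcases le_total (len (τ I)) (len (τ S)) with hll | hll
        · have hss : toSet (τ I) ⊂ toSet (τ S) :=
            (subset_of_mem_of_len_le htI htS hll).ssubset_of_ne hne'
          exact absurd hwI (not_le.mpr (hMQ I hIM S hSL hss))
        · have hss : toSet (τ S) ⊂ toSet (τ I) :=
            (subset_of_mem_of_len_le htS htI hll).ssubset_of_ne (Ne.symm hne')
          exact htUI (hmemU I S hSM hss htS)
      rw [hLHS, Finset.sum_eq_single_of_mem S hSM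
        (fun J hJ hne => Set.indicator_of_notMem (hother J hJ hne) _),
        Set.indicator_of_mem htA]
    · push_neg at hex
      have hL0 : muSet τ ↑L t = 0 := by
        simp only [muSet]
        refine le_antisymm (iSup₂_le fun I hI => ?_) zero_le'
        rw [Finset.mem_coe] at hI
        rw [Set.indicator_of_notMem (hex I hI), mul_zero]
        simp
      rw [hL0]
      symm
      refine Finset.sum_eq_zero fun I hIM => ?_
      exact Set.indicator_of_notMem (fun h => hex I (hML I hIM) h.1) _
  have hsum_sub : ∀ I : DyadicI,
      (⋃ J ∈ gen1 (τ I) (τ '' (M : Set DyadicI)), toSet J) ⊆ toSet (τ I) :=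
    fun I => Set.iUnion₂_subset fun J hJ => hJ.2.1.subset
  have hAsubIcc : ∀ I, A I ⊆ Set.Icc (0:ℝ) 1 :=
    fun I => Set.diff_subset.trans (toSet_subset_Icc _)
  calc ∫⁻ t in Set.Icc (0:ℝ) 1, muSet τ ↑L t
      = ∫⁻ t in Set.Icc (0:ℝ) 1,
          ∑ I ∈ M, (A I).indicator (fun _ => ENNReal.ofReal (w I)) t :=
        lintegral_congr fun t => key t
    _ = ∑ I ∈ M, ∫⁻ t in Set.Icc (0:ℝ) 1,
          (A I).indicator (fun _ => ENNReal.ofReal (w I)) t :=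
        lintegral_finset_sum _ fun I _ => measurable_const.indicator (hAmeas I)
    _ = ∑ I ∈ M, ENNReal.ofReal (w I) * volume (A I) := by
        refine Finset.sum_congr rfl fun I _ => ?_
        rw [lintegral_indicator_const (hAmeas I), Measure.restrict_apply (hAmeas I),
          Set.inter_eq_left.mpr (hAsubIcc I)]
    _ = ∑ I ∈ M, ENNReal.ofReal (len I *
          ((len (τ I) -
              (volume (⋃ J ∈ gen1 (τ I) (τ '' (M : Set DyadicI)), toSet J)).toReal) /
            len (τ I))) := by
        refine Finset.sum_congr rfl fun I hIM => ?_
        have hUG : U I = ⋃ J ∈ gen1 (τ I) (τ '' (M : Set DyadicI)), toSet J := by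
          apply Set.Subset.antisymm
          · intro x hx
            simp only [hUdef, Set.mem_iUnion] at hx
            obtain ⟨J0, hJ0, hxJ0⟩ := hx
            obtain ⟨hJ0M, hJ0ss⟩ := Finset.mem_filter.mp hJ0
            set F : Finset DyadicI := M.filter
              (fun J => toSet (τ J0) ⊆ toSet (τ J) ∧ toSet (τ J) ⊂ toSet (τ I)) with hF
            have hJ0F : J0 ∈ F :=
              Finset.mem_filter.mpr ⟨hJ0M, Set.Subset.refl _, hJ0ss⟩
            obtain ⟨J1, hJ1F, hJ1max⟩ := F.exists_max_image (fun J => len (τ J)) ⟨J0, hJ0F⟩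
            obtain ⟨hJ1M, hJ1sup, hJ1ss⟩ := Finset.mem_filter.mp hJ1F
            refine Set.mem_iUnion₂.mpr ⟨τ J1, ?_, hJ1sup hxJ0⟩
            refine ⟨⟨J1, Finset.mem_coe.mpr hJ1M, rfl⟩, hJ1ss, ?_⟩
            rintro J' ⟨J2, hJ2M, rfl⟩ hJ2ss hsub
            have hJ2F : J2 ∈ F := Finset.mem_filter.mpr
              ⟨Finset.mem_coe.mp hJ2M, hJ1sup.trans hsub, hJ2ss⟩
            exact congrArg τ (hτ (eq_of_subset_of_len_le hsub (hJ1max J2 hJ2F))).symm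
          · intro x hx
            obtain ⟨J, hJgen, hxJ⟩ := Set.mem_iUnion₂.mp hx
            obtain ⟨⟨J2, hJ2M, rfl⟩, hss, -⟩ := hJgen
            simp only [hUdef, Set.mem_iUnion]
            exact ⟨J2, Finset.mem_filter.mpr ⟨Finset.mem_coe.mp hJ2M, hss⟩, hxJ⟩
        have hvolU_fin : volume (U I) ≠ ⊤ :=
          ((measure_mono (hUsub I)).trans_lt
            (by rw [volume_toSet]; exact ENNReal.ofReal_lt_top)).ne
        have hdiff : volume (A I) = volume (toSet (τ I)) - volume (U I) :=
          measure_diff (hUsub I) (hUmeas I).nullMeasurableSet hvolU_fin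
        rw [hdiff, ← hUG, volume_toSet]
        set v : ℝ := (volume (U I)).toReal with hv
        have hUv : volume (U I) = ENNReal.ofReal v :=
          (ENNReal.ofReal_toReal hvolU_fin).symm
        have hv_nonneg : 0 ≤ v := ENNReal.toReal_nonneg
        have hv_le : v ≤ len (τ I) := by
          have hm : volume (U I) ≤ ENNReal.ofReal (len (τ I)) := by
            rw [← volume_toSet]
            exact measure_mono (hUsub I)
          calc v ≤ (ENNReal.ofReal (len (τ I))).toReal :=
                ENNReal.toReal_mono ENNReal.ofReal_ne_top hm
            _ = len (τ I) := ENNReal.toReal_ofReal (len_pos _).le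
        rw [hUv, ← ENNReal.ofReal_sub _ hv_nonneg,
          ← ENNReal.ofReal_mul (hwpos I).le]
        congr 1
        rw [hw]
        rw [div_mul_eq_mul_div, mul_div_assoc]
    _ = ENNReal.ofReal (∑ I ∈ M, len I *
          ((len (τ I) -
              (volume (⋃ J ∈ gen1 (τ I) (τ '' (M : Set DyadicI)), toSet J)).toReal) /
            len (τ I))) := by
        rw [ENNReal.ofReal_sum_of_nonneg]
        intro I hIM
        have hm : volume (⋃ J ∈ gen1 (τ I) (τ '' (M : Set DyadicI)), toSet J)
            ≤ ENNReal.ofReal (len (τ I)) := by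
          rw [← volume_toSet]
          exact measure_mono (hsum_sub I)
        have hle : (volume (⋃ J ∈ gen1 (τ I) (τ '' (M : Set DyadicI)), toSet J)).toReal
            ≤ len (τ I) := by
          calc _ ≤ (ENNReal.ofReal (len (τ I))).toReal :=
                ENNReal.toReal_mono ENNReal.ofReal_ne_top hm
            _ = len (τ I) := ENNReal.toReal_ofReal (len_pos _).le
        have h2 : (0:ℝ) ≤ (len (τ I) -
            (volume (⋃ J ∈ gen1 (τ I) (τ '' (M : Set DyadicI)), toSet J)).toReal) /
            len (τ I) := div_nonneg (by linarith) (len_pos _).le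
        exact mul_nonneg (len_pos _).le h2
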